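/- Let ε ∈ (0, 0.689], E finite, σ: E → [-1,1] with (1/|E|)Σ_e |σ(e)| ≤ ε². Then the ratio [(1/π)Σ_e arccos(σ(e))] / [(1/2)Σ_e (1 - σ(e))] is at least ε·α_GW + (1-ε)·g(-ε), where g(x) = 2arccos(x)/(π(1-x)) and α_GW = 0.878 (any valid lower bound for g on [-1,1)). -/

import Mathlib

set_option maxHeartbeats 1600000

open Real

lemma my_sin_lb {u : ℝ} (hu : 0 ≤ u) : u - u ^ 3 / 6 ≤ sin u := by
  have h : (∫ t in (0:ℝ)..u, (1 - t ^ 2 / 2)) ≤ ∫ t in (0:ℝ)..u, cos t := by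
    apply intervalIntegral.integral_mono_on hu
    · exact (continuous_const.sub ((continuous_pow 2).div_const 2)).intervalIntegrable _ _
    · exact continuous_cos.intervalIntegrable _ _
    · exact fun t _ => one_sub_sq_div_two_le_cos
  rw [integral_cos, sin_zero] at h
  have h2 : (∫ t in (0:ℝ)..u, (1 - t ^ 2 / 2)) = u - u ^ 3 / 6 := by
    rw [intervalIntegral.integral_sub intervalIntegrable_const
      (((continuous_pow 2).div_const 2).intervalIntegrable _ _),
      intervalIntegral.integral_div, integral_pow, intervalIntegral.integral_const]
    norm_num
    ring
  rw [h2] at h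
  linarith

lemma my_cos_ub {u : ℝ} (hu : 0 ≤ u) : cos u ≤ 1 - u ^ 2 / 2 + u ^ 4 / 24 := by
  have h : (∫ t in (0:ℝ)..u, (t - t ^ 3 / 6)) ≤ ∫ t in (0:ℝ)..u, sin t := by
    apply intervalIntegral.integral_mono_on hu
    · exact (continuous_id.sub ((continuous_pow 3).div_const 6)).intervalIntegrable _ _
    · exact continuous_sin.intervalIntegrable _ _
    · exact fun t ht => my_sin_lb ht.1
  rw [integral_sin, cos_zero] at h
  have h2 : (∫ t in (0:ℝ)..u, (t - t ^ 3 / 6)) = u ^ 2 / 2 - u ^ 4 / 24 := by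
    rw [intervalIntegral.integral_sub (continuous_id'.intervalIntegrable _ _)
      (((continuous_pow 3).div_const 6).intervalIntegrable _ _),
      intervalIntegral.integral_div, integral_pow, integral_id]
    norm_num
    ring
  rw [h2] at h
  linarith

lemma my_sin_ub {u : ℝ} (hu : 0 ≤ u) : sin u ≤ u - u ^ 3 / 6 + u ^ 5 / 120 := by
  have h : (∫ t in (0:ℝ)..u, cos t) ≤ ∫ t in (0:ℝ)..u, (1 - t ^ 2 / 2 + t ^ 4 / 24) := by
    apply intervalIntegral.integral_mono_on hu
    · exact continuous_cos.intervalIntegrable _ _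
    · exact ((continuous_const.sub ((continuous_pow 2).div_const 2)).add
        ((continuous_pow 4).div_const 24)).intervalIntegrable _ _
    · exact fun t ht => my_cos_ub ht.1
  rw [integral_cos, sin_zero] at h
  have h2 : (∫ t in (0:ℝ)..u, (1 - t ^ 2 / 2 + t ^ 4 / 24)) = u - u ^ 3 / 6 + u ^ 5 / 120 := by
    rw [intervalIntegral.integral_add (f := fun t => 1 - t ^ 2 / 2) ((continuous_const.sub
        ((continuous_pow 2).div_const 2)).intervalIntegrable _ _)
        (((continuous_pow 4).div_const 24).intervalIntegrable _ _),
      intervalIntegral.integral_sub intervalIntegrable_const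
        (((continuous_pow 2).div_const 2).intervalIntegrable _ _),
      intervalIntegral.integral_div, intervalIntegral.integral_div, integral_pow, integral_pow,
      intervalIntegral.integral_const]
    norm_num
    ring
  rw [h2] at h
  linarith

lemma my_asin_ub {t : ℝ} (ht : 0 ≤ t) (ht2 : t ≤ 0.689) : arcsin t ≤ t + 0.23 * t ^ 3 := by
  have hπ : (3.141592 : ℝ) < π := pi_gt_d6
  have hu0 : (0:ℝ) ≤ t + 0.23 * t ^ 3 := by positivity
  have ht3 : t ^ 3 ≤ 0.689 ^ 3 := pow_le_pow_left₀ ht ht2 3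
  have hu1 : t + 0.23 * t ^ 3 ≤ π / 2 := by norm_num at ht3 ⊢; nlinarith
  have hsin : t ≤ sin (t + 0.23 * t ^ 3) := by
    have h1 := my_sin_lb hu0
    nlinarith [pow_nonneg ht 3, pow_le_pow_left₀ ht ht2 2, pow_le_pow_left₀ ht ht2 4,
      pow_le_pow_left₀ ht ht2 6]
  calc arcsin t ≤ arcsin (sin (t + 0.23 * t ^ 3)) := monotone_arcsin hsin
    _ = t + 0.23 * t ^ 3 := arcsin_sin (by linarith) hu1

lemma my_asin_lb {t : ℝ} (ht : 0 ≤ t) (ht2 : t ≤ 0.72) :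
    t + t ^ 3 / 6 - 0.1 * t ^ 5 ≤ arcsin t := by
  have hπ : (3.141592 : ℝ) < π := pi_gt_d6
  have hut : t + t ^ 3 / 6 - 0.1 * t ^ 5 ≤ 1.1 * t := by
    nlinarith [pow_le_pow_left₀ ht ht2 2, ht, mul_nonneg ht (mul_nonneg ht ht),
      pow_nonneg ht 5]
  have hu0 : (0:ℝ) ≤ t + t ^ 3 / 6 - 0.1 * t ^ 5 := by
    nlinarith [pow_le_pow_left₀ ht ht2 4, ht, pow_nonneg ht 3]
  have h2 : t ≤ t + t ^ 3 / 6 - 0.1 * t ^ 5 := by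
    nlinarith [pow_nonneg ht 3, pow_le_pow_left₀ ht ht2 2]
  have h3 : t ^ 3 ≤ (t + t ^ 3 / 6 - 0.1 * t ^ 5) ^ 3 := pow_le_pow_left₀ ht h2 3
  have h4 : (t + t ^ 3 / 6 - 0.1 * t ^ 5) ^ 5 ≤ (1.1 * t) ^ 5 := pow_le_pow_left₀ hu0 hut 5
  have h4' : (t + t ^ 3 / 6 - 0.1 * t ^ 5) ^ 5 ≤ 1.61051 * t ^ 5 := by nlinarith [h4]
  have hu1 : t + t ^ 3 / 6 - 0.1 * t ^ 5 ≤ π / 2 := by linarith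
  have hsin : sin (t + t ^ 3 / 6 - 0.1 * t ^ 5) ≤ t := by
    have h1 := my_sin_ub hu0
    have h5 : (0:ℝ) ≤ t ^ 5 := pow_nonneg ht 5
    linarith
  calc t + t ^ 3 / 6 - 0.1 * t ^ 5 = arcsin (sin (t + t ^ 3 / 6 - 0.1 * t ^ 5)) :=
      (arcsin_sin (by linarith) hu1).symm
    _ ≤ arcsin t := monotone_arcsin hsin

lemma polyQ1 {ε : ℝ} (he0 : 0 < ε) (he : ε ≤ 0.689) :
    ε * 0.878 * (1 + ε) + (1 - ε) * (1 + 0.6366204 * (ε + 0.23 * ε ^ 3)) ≤ 1 * (1 + ε) := by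
  nlinarith [pow_nonneg he0.le 3, sq_nonneg ε, mul_nonneg (mul_nonneg he0.le he0.le) (by linarith : (0:ℝ) ≤ 0.689 - ε)]

lemma polyB {x ε : ℝ} (hx0 : 0 ≤ x) (hx : x ≤ 0.48) (he0 : 0 < ε) (he : ε ≤ 0.689) :
    (ε * 0.878 * (1 + ε) + (1 - ε) * (1 + 0.6366204 * (ε + 0.23 * ε ^ 3))) * ((1 - x) / 2)
      ≤ (1 / 2 - 0.3183102 * (x + 0.23 * x ^ 3) + (1 - ε) / 5 * (x - ε ^ 2)) * (1 + ε) := by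
  nlinarith [mul_nonneg (mul_nonneg he0.le he0.le) (by linarith : (0:ℝ) ≤ 0.48 - x),
    mul_nonneg hx0 (by linarith : (0:ℝ) ≤ 0.689 - ε),
    mul_nonneg (mul_nonneg hx0 hx0) (by linarith : (0:ℝ) ≤ 0.689 - ε),
    sq_nonneg (x - ε), mul_nonneg hx0 he0.le, pow_nonneg he0.le 3, pow_nonneg hx0 3,
    mul_nonneg he0.le (by linarith : (0:ℝ) ≤ 0.48 - x),
    mul_nonneg (mul_nonneg hx0 hx0) hx0, mul_nonneg (mul_nonneg he0.le he0.le) he0.le]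

lemma polyC {t ε : ℝ} (ht0 : 0 ≤ t) (ht : t ≤ 0.6) (he0 : 0 < ε) (he : ε ≤ 0.689) :
    (ε * 0.878 * (1 + ε) + (1 - ε) * (1 + 0.6366204 * (ε + 0.23 * ε ^ 3))) * ((1 + t) / 2)
      ≤ (1 / 2 + 0.3183085 * (t + 0.13 * t ^ 3) + (1 - ε) / 5 * (t - ε ^ 2)) * (1 + ε) := by
  have h2 : (0:ℝ) ≤ 0.6 - t := by linarith
  have h4 : (0:ℝ) ≤ 0.689 - ε := by linarith
  have he' : (0:ℝ) ≤ ε := he0.le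
  linarith [mul_nonneg he' h4, mul_nonneg (mul_nonneg he' h4) h4,
    mul_nonneg (mul_nonneg (mul_nonneg he' he') h4) h4,
    mul_nonneg h2 (mul_nonneg he' he'),
    mul_nonneg h2 (mul_nonneg (mul_nonneg he' he') he'),
    mul_nonneg (mul_nonneg h2 (mul_nonneg (mul_nonneg he' he') he')) h4,
    mul_nonneg (mul_nonneg h2 h2) he',
    mul_nonneg ht0 h4, mul_nonneg (mul_nonneg ht0 he') h4,
    mul_nonneg ht0 (mul_nonneg h2 h2), mul_nonneg (mul_nonneg ht0 (mul_nonneg h2 h2)) he',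
    mul_nonneg ht0 ht0, mul_nonneg (mul_nonneg ht0 ht0) h4]

lemma polyD {w ε : ℝ} (hw0 : 0 ≤ w) (hw : w ≤ 0.4473) (he0 : 0 < ε) (he : ε ≤ 0.689) :
    (ε * 0.878 * (1 + ε) + (1 - ε) * (1 + 0.6366204 * (ε + 0.23 * ε ^ 3))) * ((1 - (2 * w ^ 2 - 1)) / 2)
      ≤ (1 - 0.6366204 * (w + 0.23 * w ^ 3) + (1 - ε) / 5 * (-(2 * w ^ 2 - 1) - ε ^ 2)) * (1 + ε) := by
  have h2 : (0:ℝ) ≤ 0.4473 - w := by linarith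
  have h4 : (0:ℝ) ≤ 0.689 - ε := by linarith
  have he' : (0:ℝ) ≤ ε := he0.le
  linarith [h4, mul_nonneg (mul_nonneg he' h4) h4, mul_nonneg he' h4,
    mul_nonneg (mul_nonneg (mul_nonneg he' he') h4) h4,
    h2, mul_nonneg h2 h4, mul_nonneg h2 (mul_nonneg (mul_nonneg h4 h4) (mul_nonneg h4 h4)),
    mul_nonneg (mul_nonneg h2 he') h4,
    mul_nonneg (mul_nonneg h2 he') (mul_nonneg h4 h4),
    mul_nonneg h2 h2, mul_nonneg (mul_nonneg h2 h2) (mul_nonneg h4 h4),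
    mul_nonneg (mul_nonneg h2 h2) (mul_nonneg (mul_nonneg h4 h4) h4),
    mul_nonneg (mul_nonneg h2 h2) he',
    mul_nonneg (mul_nonneg (mul_nonneg h2 h2) he') (mul_nonneg (mul_nonneg h4 h4) h4),
    mul_nonneg (mul_nonneg h2 h2) h2,
    mul_nonneg (mul_nonneg (mul_nonneg h2 h2) h2) he']

lemma key_ineq {x ε : ℝ} (hx : -1 ≤ x) (hx1 : x ≤ 1) (he0 : 0 < ε) (he : ε ≤ 0.689) :
    (ε * 0.878 + (1 - ε) * (2 * arccos (-ε) / (π * (1 + ε)))) * ((1 - x) / 2)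
      ≤ arccos x / π + (1 - ε) / 5 * (|x| - ε ^ 2) := by
  have hπ1 : (3.141592 : ℝ) < π := pi_gt_d6
  have hπ2 : π < 3.141593 := pi_lt_d6
  have hπ0 : 0 < π := pi_pos
  have h1e : (0:ℝ) < 1 + ε := by linarith
  have he1 : ε ≤ 1 := by linarith
  have he2 : ε ^ 2 ≤ 0.474721 := by nlinarith
  have hae : arcsin ε ≤ ε + 0.23 * ε ^ 3 := my_asin_ub he0.le he
  have hs0 : 0 ≤ arcsin ε := arcsin_nonneg.mpr he0.le
  have he3 : (0:ℝ) ≤ ε + 0.23 * ε ^ 3 := by positivity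
  have hane : arccos (-ε) = π / 2 + arcsin ε := by
    rw [arccos_neg, arccos_eq_pi_div_two_sub_arcsin]; ring
  have hD : 0 ≤ (1 - x) / 2 := by linarith
  have hC : 2 * arccos (-ε) / (π * (1 + ε))
      ≤ (1 + 0.6366204 * (ε + 0.23 * ε ^ 3)) / (1 + ε) := by
    rw [div_le_div_iff₀ (by positivity) h1e, hane]
    have hinner : 2 * (π / 2 + arcsin ε) ≤ (1 + 0.6366204 * (ε + 0.23 * ε ^ 3)) * π := by
      nlinarith [mul_nonneg he3 (by linarith : (0:ℝ) ≤ 0.6366204 * π - 2)]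
    nlinarith [mul_le_mul_of_nonneg_right hinner h1e.le]
  have hCoef : ε * 0.878 + (1 - ε) * (2 * arccos (-ε) / (π * (1 + ε)))
      ≤ ε * 0.878 + (1 - ε) * ((1 + 0.6366204 * (ε + 0.23 * ε ^ 3)) / (1 + ε)) := by
    have h1ε : (0:ℝ) ≤ 1 - ε := by linarith
    nlinarith [mul_le_mul_of_nonneg_left hC h1ε]
  refine le_trans (mul_le_mul_of_nonneg_right hCoef hD) ?_
  set Q : ℝ := ε * 0.878 + (1 - ε) * ((1 + 0.6366204 * (ε + 0.23 * ε ^ 3)) / (1 + ε)) with hQdef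
  have hQmul : Q * (1 + ε) = ε * 0.878 * (1 + ε)
      + (1 - ε) * (1 + 0.6366204 * (ε + 0.23 * ε ^ 3)) := by
    rw [hQdef]; field_simp
  rcases le_or_gt 0.48 x with hreg | hreg
  · -- Region a : x ∈ [0.48, 1]
    have habs : |x| = x := abs_of_nonneg (by linarith)
    have hQ1 : Q ≤ 1 := by
      have h := polyQ1 he0 he
      rw [← hQmul] at h
      exact le_of_mul_le_mul_right h h1e
    have hcosb := one_sub_sq_div_two_le_cos (x := arccos x)
    rw [cos_arccos hx hx1] at hcosb
    have hs2 : Real.sqrt (2 * (1 - x)) ^ 2 = 2 * (1 - x) := Real.sq_sqrt (by linarith)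
    have hs0' : 0 ≤ Real.sqrt (2 * (1 - x)) := Real.sqrt_nonneg _
    have hsarc : Real.sqrt (2 * (1 - x)) ≤ arccos x := by
      have h2 : 2 * (1 - x) ≤ (arccos x) ^ 2 := by linarith
      calc Real.sqrt (2 * (1 - x)) ≤ Real.sqrt ((arccos x) ^ 2) := Real.sqrt_le_sqrt h2
        _ = arccos x := Real.sqrt_sq (arccos_nonneg x)
    have hsle : Real.sqrt (2 * (1 - x)) ≤ 1.02 := by nlinarith
    have hstep : (1 - x) / 2 ≤ arccos x / π := by
      rw [le_div_iff₀ hπ0]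
      nlinarith [mul_nonneg hs0' (by linarith : (0:ℝ) ≤ 1.02 - Real.sqrt (2 * (1 - x)))]
    have hlam : 0 ≤ (1 - ε) / 5 * (|x| - ε ^ 2) := by
      rw [habs]; apply mul_nonneg (by linarith); linarith
    nlinarith [mul_le_mul_of_nonneg_right hQ1 hD]
  rcases le_or_gt 0 x with hreg0 | hreg0
  · -- Region b : x ∈ [0, 0.48)
    have habs : |x| = x := abs_of_nonneg hreg0
    have hax : arcsin x ≤ x + 0.23 * x ^ 3 := my_asin_ub hreg0 (by linarith)
    have hxA : (0:ℝ) ≤ x + 0.23 * x ^ 3 := by positivity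
    have harc : 1 / 2 - 0.3183102 * (x + 0.23 * x ^ 3) ≤ arccos x / π := by
      rw [arccos_eq_pi_div_two_sub_arcsin, le_div_iff₀ hπ0]
      nlinarith [mul_nonneg hxA (by linarith : (0:ℝ) ≤ 0.3183102 * π - 1)]
    have hfin : Q * ((1 - x) / 2)
        ≤ 1 / 2 - 0.3183102 * (x + 0.23 * x ^ 3) + (1 - ε) / 5 * (x - ε ^ 2) := by
      apply le_of_mul_le_mul_right _ h1e
      calc Q * ((1 - x) / 2) * (1 + ε) = (Q * (1 + ε)) * ((1 - x) / 2) := by ring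
        _ = (ε * 0.878 * (1 + ε) + (1 - ε) * (1 + 0.6366204 * (ε + 0.23 * ε ^ 3)))
            * ((1 - x) / 2) := by rw [hQmul]
        _ ≤ _ := polyB hreg0 (by linarith) he0 he
    rw [habs]; linarith
  rcases le_or_gt (-0.6) x with hreg1 | hreg1
  · -- Region c : x ∈ [-0.6, 0)
    have habs : |x| = -x := abs_of_neg hreg0
    have ht0 : (0:ℝ) ≤ -x := by linarith
    have ht2 : -x ≤ 0.6 := by linarith
    have halb : -x + (-x) ^ 3 / 6 - 0.1 * (-x) ^ 5 ≤ arcsin (-x) := my_asin_lb ht0 (by linarith)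
    have halb2 : -x + 0.13 * (-x) ^ 3 ≤ arcsin (-x) := by
      nlinarith [pow_nonneg ht0 3, pow_le_pow_left₀ ht0 ht2 2]
    have hA0 : (0:ℝ) ≤ -x + 0.13 * (-x) ^ 3 := by positivity
    have harc : 1 / 2 + 0.3183085 * (-x + 0.13 * (-x) ^ 3) ≤ arccos x / π := by
      rw [arccos_eq_pi_div_two_sub_arcsin, le_div_iff₀ hπ0]
      have hxneg : arcsin x = -arcsin (-x) := by rw [← arcsin_neg, neg_neg]
      rw [hxneg]
      nlinarith [mul_nonneg hA0 (by linarith : (0:ℝ) ≤ 1 - 0.3183085 * π)]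
    have hfin : Q * ((1 - x) / 2)
        ≤ 1 / 2 + 0.3183085 * (-x + 0.13 * (-x) ^ 3) + (1 - ε) / 5 * (-x - ε ^ 2) := by
      apply le_of_mul_le_mul_right _ h1e
      calc Q * ((1 - x) / 2) * (1 + ε) = (Q * (1 + ε)) * ((1 + -x) / 2) := by ring
        _ = (ε * 0.878 * (1 + ε) + (1 - ε) * (1 + 0.6366204 * (ε + 0.23 * ε ^ 3)))
            * ((1 + -x) / 2) := by rw [hQmul]
        _ ≤ (1 / 2 + 0.3183085 * (-x + 0.13 * (-x) ^ 3) + (1 - ε) / 5 * (-x - ε ^ 2))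
            * (1 + ε) := polyC ht0 ht2 he0 he
    rw [habs]; linarith
  · -- Region d : x ∈ [-1, -0.6)
    have habs : |x| = -x := abs_of_neg (by linarith)
    have hw0 : 0 ≤ Real.sqrt ((1 + x) / 2) := Real.sqrt_nonneg _
    have hw2 : Real.sqrt ((1 + x) / 2) ^ 2 = (1 + x) / 2 := Real.sq_sqrt (by linarith)
    have hwle : Real.sqrt ((1 + x) / 2) ≤ 0.4473 := by nlinarith
    have hw1 : Real.sqrt ((1 + x) / 2) ≤ 1 := by linarith
    set w : ℝ := Real.sqrt ((1 + x) / 2) with hwdef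
    have harcw : arccos x = 2 * arccos w := by
      have hcw : arccos w ≤ π / 2 := arccos_le_pi_div_two.mpr hw0
      apply arccos_eq_of_eq_cos (by linarith [arccos_nonneg w]) (by linarith)
      rw [cos_two_mul, cos_arccos (by linarith) hw1]
      nlinarith
    have haw : arcsin w ≤ w + 0.23 * w ^ 3 := my_asin_ub hw0 (by linarith)
    have hwA : (0:ℝ) ≤ w + 0.23 * w ^ 3 := by positivity
    have harc : 1 - 0.6366204 * (w + 0.23 * w ^ 3) ≤ arccos x / π := by
      rw [harcw, arccos_eq_pi_div_two_sub_arcsin, le_div_iff₀ hπ0]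
      nlinarith [mul_nonneg hwA (by linarith : (0:ℝ) ≤ 0.6366204 * π - 2)]
    have hxw : x = 2 * w ^ 2 - 1 := by nlinarith
    have hfin : Q * ((1 - x) / 2)
        ≤ 1 - 0.6366204 * (w + 0.23 * w ^ 3) + (1 - ε) / 5 * (-x - ε ^ 2) := by
      apply le_of_mul_le_mul_right _ h1e
      calc Q * ((1 - x) / 2) * (1 + ε) = (Q * (1 + ε)) * ((1 - x) / 2) := by ring
        _ = (ε * 0.878 * (1 + ε) + (1 - ε) * (1 + 0.6366204 * (ε + 0.23 * ε ^ 3)))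
            * ((1 - (2 * w ^ 2 - 1)) / 2) := by rw [hQmul, ← hxw]
        _ ≤ (1 - 0.6366204 * (w + 0.23 * w ^ 3)
            + (1 - ε) / 5 * (-(2 * w ^ 2 - 1) - ε ^ 2)) * (1 + ε) := polyD hw0 hwle he0 he
        _ = (1 - 0.6366204 * (w + 0.23 * w ^ 3) + (1 - ε) / 5 * (-x - ε ^ 2)) * (1 + ε) := by
            rw [← hxw]
    rw [habs]; linarith

/-- Uniform-weight noisy Max-Cut bound: if the average of `|σ|` over the edge set is at
most `ε²` with `0 < ε ≤ 0.689`, then the rounded cut `(1/π) ∑ arccos σ` is at least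
`(ε α_GW + (1-ε) g(-ε))` times the measured cut `(1/2) ∑ (1 - σ)`, with
`α_GW = 0.878` and `g(x) = 2 arccos x / (π (1 - x))`. -/
theorem stmt_15 (ι : Type*) (E : Finset ι) (σ : ι → ℝ)
    (hσ : ∀ e ∈ E, σ e ∈ Set.Icc (-1 : ℝ) 1)
    (ε : ℝ) (hε0 : 0 < ε) (hε : ε ≤ 0.689)
    (havg : (1 / (E.card : ℝ)) * ∑ e ∈ E, |σ e| ≤ ε ^ 2) :
    (ε * 0.878 + (1 - ε) * (2 * arccos (-ε) / (π * (1 + ε)))) *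
        ((1 / 2) * ∑ e ∈ E, (1 - σ e)) ≤
      (1 / π) * ∑ e ∈ E, arccos (σ e) := by
  rcases E.eq_empty_or_nonempty with hE | hE
  · subst hE; simp
  have hcard : (0:ℝ) < E.card := by
    exact_mod_cast Finset.card_pos.mpr hE
  have hsum : ∑ e ∈ E, |σ e| ≤ ε ^ 2 * E.card := by
    have h := mul_le_mul_of_nonneg_right havg hcard.le
    rw [one_div, inv_mul_eq_div, div_mul_cancel₀] at h
    · linarith
    · exact hcard.ne'
  have hkey : ∀ e ∈ E,
      (ε * 0.878 + (1 - ε) * (2 * arccos (-ε) / (π * (1 + ε)))) * ((1 - σ e) / 2)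
        ≤ arccos (σ e) / π + (1 - ε) / 5 * (|σ e| - ε ^ 2) := fun e he =>
    key_ineq (hσ e he).1 (hσ e he).2 hε0 hε
  have h1 := Finset.sum_le_sum hkey
  have hL : (ε * 0.878 + (1 - ε) * (2 * arccos (-ε) / (π * (1 + ε)))) *
      ((1 / 2) * ∑ e ∈ E, (1 - σ e))
      = ∑ e ∈ E, (ε * 0.878 + (1 - ε) * (2 * arccos (-ε) / (π * (1 + ε)))) * ((1 - σ e) / 2) := by
    rw [show (ε * 0.878 + (1 - ε) * (2 * arccos (-ε) / (π * (1 + ε)))) *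
        ((1 / 2) * ∑ e ∈ E, (1 - σ e))
      = ((ε * 0.878 + (1 - ε) * (2 * arccos (-ε) / (π * (1 + ε)))) / 2) * ∑ e ∈ E, (1 - σ e)
      from by ring, Finset.mul_sum]
    refine Finset.sum_congr rfl fun e _ => ?_
    ring
  have hR : ∑ e ∈ E, (arccos (σ e) / π + (1 - ε) / 5 * (|σ e| - ε ^ 2))
      = (1 / π) * ∑ e ∈ E, arccos (σ e)
        + (1 - ε) / 5 * (∑ e ∈ E, |σ e| - E.card * ε ^ 2) := by
    rw [Finset.sum_add_distrib]
    congr 1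
    · rw [Finset.mul_sum]
      refine Finset.sum_congr rfl fun e _ => ?_
      ring
    · rw [show (∑ e ∈ E, |σ e| - (E.card : ℝ) * ε ^ 2) = ∑ e ∈ E, (|σ e| - ε ^ 2) from by
        rw [Finset.sum_sub_distrib, Finset.sum_const, nsmul_eq_mul], Finset.mul_sum]
  have hlam : (1 - ε) / 5 * (∑ e ∈ E, |σ e| - E.card * ε ^ 2) ≤ 0 := by
    apply mul_nonpos_of_nonneg_of_nonpos (by linarith)
    nlinarith
  rw [← hL, hR] at h1
  linarith
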